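/- Let B ≥ 2 and let (W_b, L_b, Z_b, K_b) for b ∈ {1,…,B} be random variables on a common probability space with values in finite sets, and let K_0 be a constant random variable. Write X_{i:j} for the tuple (X_i,…,X_j). Assume: (i) W_1 and L_1 are constant (no secure message in the first block); (ii) for each b ∈ {1,…,B−1}, the future messages (W_{b+2:B}, L_{b+2:B}) are independent of (Z_{1:b+1}, W_{1:b+1}, L_{1:b+1}) (with the convention that this tuple of future messages is empty when b = B−1); (iii) for each b ∈ {1,…,B−1}, the Markov chain (W_{1:b}, L_{1:b}, Z_{1:b}) − K_b − (Z_{b+1}, W_{b+1}, L_{b+1}) holds; and (iv) for each b ∈ {1,…,B−1}, the Markov chain (W_{1:b−1}, L_{1:b−1}, Z_{1:b−1}) − (W_b, L_b, Z_b, K_{b−1}) − K_b holds. Then the total leakage satisfies I(W_{1:B}, L_{1:B}; Z_{1:B}) ≤ Σ_{b=1}^{B−1} [ I(W_{b+1}, L_{b+1}; Z_{b+1}) + I(W_b, L_b, Z_b, K_{b−1}; K_b) ]. (This is the aggregate block-Markov secrecy bound, equations (44)–(48), in the proof of Theorem 1, where W_b and L_b are the secure message parts, Z_b the eavesdropper observations,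 and K_b the secret key generated in block b.) -/

import Mathlib

open scoped BigOperators Classical

/-- A probability mass function on a finite type, representing a finite probability space. -/
structure FinPMF (Ω : Type*) [Fintype Ω] where
  p : Ω → ℝ
  nonneg : ∀ ω, 0 ≤ p ω
  sum_one : ∑ ω, p ω = 1

namespace FinPMF

variable {Ω : Type*} [Fintype Ω] (μ : FinPMF Ω)

/-- Probability that the random variable `X` takes the value `x`. -/
def prob {α : Type*} [DecidableEq α] (X : Ω → α) (x : α) : ℝ :=
  ∑ ω, if X ω = x then μ.p ω else 0

/-- Shannon entropy `H(X)` (with the natural logarithm as the fixed base)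
of a random variable with values in a finite set. -/
noncomputable def H {α : Type*} [Fintype α] [DecidableEq α] (X : Ω → α) : ℝ :=
  ∑ x : α, -(μ.prob X x * Real.log (μ.prob X x))

/-- Conditional Shannon entropy `H(X | Y) = H(X, Y) - H(Y)`. -/
noncomputable def condH {α β : Type*} [Fintype α] [DecidableEq α] [Fintype β] [DecidableEq β]
    (X : Ω → α) (Y : Ω → β) : ℝ :=
  μ.H (fun ω => (X ω, Y ω)) - μ.H Y

/-- Mutual information `I(X ; Y) = H(X) + H(Y) - H(X, Y)`. -/
noncomputable def mutInfo {α β : Type*} [Fintype α] [DecidableEq α] [Fintype β] [DecidableEq β]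
    (X : Ω → α) (Y : Ω → β) : ℝ :=
  μ.H X + μ.H Y - μ.H (fun ω => (X ω, Y ω))

/-- The random variables `X` and `Y` are independent. -/
def Indep {α β : Type*} [DecidableEq α] [DecidableEq β] (X : Ω → α) (Y : Ω → β) : Prop :=
  ∀ x y, μ.prob (fun ω => (X ω, Y ω)) (x, y) = μ.prob X x * μ.prob Y y

/-- Markov chain `A − B − C`: the random variables `A` and `C` are conditionally
independent given `B`, expressed multiplicatively as
`P(A=a, B=b, C=c) · P(B=b) = P(A=a, B=b) · P(B=b, C=c)`. -/
def CondIndep {α β γ : Type*} [DecidableEq α] [DecidableEq β] [DecidableEq γ]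
    (A : Ω → α) (B : Ω → β) (C : Ω → γ) : Prop :=
  ∀ a b c,
    μ.prob (fun ω => (A ω, B ω, C ω)) (a, b, c) * μ.prob B b =
      μ.prob (fun ω => (A ω, B ω)) (a, b) * μ.prob (fun ω => (B ω, C ω)) (b, c)

end FinPMF

namespace FinPMF
variable {Ω : Type*} [Fintype Ω] (μ : FinPMF Ω)

-- ===== basics =====
variable {α β γ : Type*}

lemma prob_nonneg [DecidableEq α] (X : Ω → α) (x : α) : 0 ≤ μ.prob X x := by
  refine Finset.sum_nonneg fun ω _ => ?_
  split <;> simp [μ.nonneg]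

lemma sum_prob [Fintype α] [DecidableEq α] (X : Ω → α) : ∑ x, μ.prob X x = 1 := by
  unfold prob
  rw [Finset.sum_comm, ← μ.sum_one]
  refine Finset.sum_congr rfl fun ω _ => ?_
  simp

lemma prob_eq_zero_iff [DecidableEq α] (X : Ω → α) (x : α) :
    μ.prob X x = 0 ↔ ∀ ω, X ω = x → μ.p ω = 0 := by
  unfold prob
  rw [Finset.sum_eq_zero_iff_of_nonneg (fun ω _ => by split <;> simp [μ.nonneg])]
  constructor
  · intro h ω hω
    have := h ω (Finset.mem_univ ω)
    simpa [hω] using this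
  · intro h ω _
    split
    · exact h ω ‹_›
    · rfl

lemma prob_mono [DecidableEq α] [DecidableEq β] (X : Ω → α) (f : α → β) (x : α) :
    μ.prob X x ≤ μ.prob (fun ω => f (X ω)) (f x) := by
  refine Finset.sum_le_sum fun ω _ => ?_
  by_cases h : X ω = x
  · simp [h]
  · simp only [if_neg h]
    split <;> simp [μ.nonneg]

lemma prob_comp_apply [Fintype α] [DecidableEq α] [DecidableEq β]
    (X : Ω → α) (f : α → β) (y : β) :
    μ.prob (fun ω => f (X ω)) y = ∑ x, if f x = y then μ.prob X x else 0 := by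
  unfold prob
  have : ∀ x : α, (if f x = y then ∑ ω, if X ω = x then μ.p ω else 0 else 0)
      = ∑ ω, if X ω = x then (if f x = y then μ.p ω else 0) else 0 := by
    intro x
    split
    · exact Finset.sum_congr rfl fun ω _ => by simp [*]
    · simp [*]
  rw [Finset.sum_congr rfl fun x _ => this x, Finset.sum_comm]
  refine Finset.sum_congr rfl fun ω _ => ?_
  rw [Finset.sum_eq_single (X ω)]
  · simp
  · intro x _ hx
    have : ¬ (X ω = x) := fun h => hx h.symm
    simp [this]
  · simp

end FinPMF


section AuxiliaryLemmas

set_option linter.unusedSectionVars false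
-- ===== determination relation =====
section Det
variable {Ω : Type*} [Fintype Ω] {α β γ δ : Type*}

def Det (X : Ω → α) (Y : Ω → β) : Prop := ∃ f : α → β, ∀ ω, Y ω = f (X ω)

lemma Det.refl (X : Ω → α) : Det X X := ⟨id, fun _ => rfl⟩

lemma Det.trans {X : Ω → α} {Y : Ω → β} {Z : Ω → γ} (h1 : Det X Y) (h2 : Det Y Z) : Det X Z := by
  obtain ⟨f, hf⟩ := h1; obtain ⟨g, hg⟩ := h2
  exact ⟨g ∘ f, fun ω => by simp [hg ω, hf ω]⟩

lemma Det.pair {X : Ω → α} {Y : Ω → β} {Z : Ω → γ} (h1 : Det X Y) (h2 : Det X Z) :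
    Det X (fun ω => (Y ω, Z ω)) := by
  obtain ⟨f, hf⟩ := h1; obtain ⟨g, hg⟩ := h2
  exact ⟨fun x => (f x, g x), fun ω => by simp [hf ω, hg ω]⟩

lemma Det.fst (Y : Ω → α) (Z : Ω → β) : Det (fun ω => (Y ω, Z ω)) Y := ⟨Prod.fst, fun _ => rfl⟩
lemma Det.snd (Y : Ω → α) (Z : Ω → β) : Det (fun ω => (Y ω, Z ω)) Z := ⟨Prod.snd, fun _ => rfl⟩

lemma Det.const [Nonempty Ω] {X : Ω → α} {C : Ω → β} (h : ∀ ω ω', C ω = C ω') : Det X C :=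
  ⟨fun _ => C (Classical.arbitrary Ω), fun ω => h ω _⟩

def MutDet (X : Ω → α) (Y : Ω → β) : Prop := Det X Y ∧ Det Y X

lemma MutDet.refl (X : Ω → α) : MutDet X X := ⟨Det.refl X, Det.refl X⟩
lemma MutDet.symm {X : Ω → α} {Y : Ω → β} (h : MutDet X Y) : MutDet Y X := ⟨h.2, h.1⟩
lemma MutDet.trans {X : Ω → α} {Y : Ω → β} {Z : Ω → γ} (h1 : MutDet X Y) (h2 : MutDet Y Z) :
    MutDet X Z := ⟨h1.1.trans h2.1, h2.2.trans h1.2⟩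

lemma MutDet.pair {X : Ω → α} {X' : Ω → β} {Y : Ω → γ} {Y' : Ω → δ}
    (h1 : MutDet X X') (h2 : MutDet Y Y') :
    MutDet (fun ω => (X ω, Y ω)) (fun ω => (X' ω, Y' ω)) :=
  ⟨(((Det.fst X Y).trans h1.1).pair ((Det.snd X Y).trans h2.1)),
   (((Det.fst X' Y').trans h1.2).pair ((Det.snd X' Y').trans h2.2))⟩

lemma MutDet.swap (X : Ω → α) (Y : Ω → β) :
    MutDet (fun ω => (X ω, Y ω)) (fun ω => (Y ω, X ω)) :=
  ⟨(Det.snd X Y).pair (Det.fst X Y), (Det.snd Y X).pair (Det.fst Y X)⟩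

lemma MutDet.assoc (X : Ω → α) (Y : Ω → β) (Z : Ω → γ) :
    MutDet (fun ω => ((X ω, Y ω), Z ω)) (fun ω => (X ω, Y ω, Z ω)) :=
  ⟨⟨fun p => (p.1.1, p.1.2, p.2), fun _ => rfl⟩, ⟨fun p => ((p.1, p.2.1), p.2.2), fun _ => rfl⟩⟩

-- tuple lemmas over a family
variable {τ : ℕ → Type*} (V : ∀ i, Ω → τ i)

def tupFrom (s n : ℕ) : Ω → (∀ t : Fin n, τ (s + t.val)) := fun ω => fun t => V (s + t.val) ω

lemma det_index {i j : ℕ} (h : i = j) : Det (V i) (V j) := by subst h; exact Det.refl _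

lemma mutDet_index {i j : ℕ} (h : i = j) : MutDet (V i) (V j) :=
  ⟨det_index V h, det_index V h.symm⟩

lemma mutDet_tup_congr {s s' n n' : ℕ} (hs : s = s') (hn : n = n') :
    MutDet (tupFrom V s n) (tupFrom V s' n') := by
  subst hs; subst hn; exact MutDet.refl _

lemma mutDet_single (s : ℕ) : MutDet (tupFrom V s 1) (V s) := by
  constructor
  · exact ⟨fun v => v ⟨0, Nat.zero_lt_one⟩, fun ω => rfl⟩
  · refine ⟨fun x => fun t => cast (congrArg τ (by omega : s = s + t.val)) x, fun ω => ?_⟩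
    funext t
    have ht : t = ⟨0, Nat.zero_lt_one⟩ := Subsingleton.elim _ _
    subst ht
    exact (cast_eq _ _).symm

lemma mutDet_split (s n m : ℕ) :
    MutDet (tupFrom V s (n + m))
      (fun ω => (tupFrom V s n ω, tupFrom V (s + n) m ω)) := by
  constructor
  · refine ⟨fun v => (fun t => v ⟨t.val, by omega⟩,
      fun t => cast (congrArg τ (by omega : s + (n + t.val) = s + n + t.val)) (v ⟨n + t.val, by omega⟩)),
      fun ω => ?_⟩
    simp only [tupFrom]
    refine Prod.ext rfl ?_
    funext t
    symm
    apply cast_eq_iff_heq.mpr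
    congr 1
    omega
  · refine ⟨fun p => fun t =>
      if h : t.val < n then cast (congrArg τ rfl) (p.1 ⟨t.val, h⟩)
      else cast (congrArg τ (by omega : s + n + (t.val - n) = s + t.val)) (p.2 ⟨t.val - n, by omega⟩),
      fun ω => ?_⟩
    funext t
    by_cases h : t.val < n
    · simp only [tupFrom, dif_pos h, cast_eq]
    · simp only [tupFrom, dif_neg h]
      symm
      apply cast_eq_iff_heq.mpr
      congr 1
      omega

lemma det_tup_zero {X : Ω → α} (s : ℕ) [Nonempty Ω] : Det X (tupFrom V s 0) :=
  Det.const (fun ω ω' => by funext t; exact absurd t.isLt (by omega))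

end Det

-- ===== entropy layer =====
namespace FinPMF
variable {Ω : Type*} [Fintype Ω] (μ : FinPMF Ω) {α β γ : Type*}

include μ in
lemma nonempty_omega : Nonempty Ω := by
  by_contra h
  have h1 := μ.sum_one
  rw [Finset.univ_eq_empty_iff.2 (not_nonempty_iff.mp h), Finset.sum_empty] at h1
  exact zero_ne_one h1

lemma H_eq [Fintype α] [DecidableEq α] (X : Ω → α) :
    μ.H X = ∑ x : α, Real.negMulLog (μ.prob X x) := by
  unfold H Real.negMulLog
  refine Finset.sum_congr rfl fun x _ => by ring

lemma prob_ne_zero_elim [DecidableEq α] {X : Ω → α} {x : α} (h : μ.prob X x ≠ 0) :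
    ∃ ω, X ω = x ∧ μ.p ω ≠ 0 := by
  by_contra hc
  push_neg at hc
  exact h ((μ.prob_eq_zero_iff X x).2 fun ω hω => hc ω hω)

lemma H_congr [Fintype α] [DecidableEq α] [Fintype β] [DecidableEq β]
    {X : Ω → α} {Y : Ω → β} (h : MutDet X Y) : μ.H X = μ.H Y := by
  obtain ⟨⟨f, hf⟩, ⟨g, hg⟩⟩ := h
  -- claims
  have claimC : ∀ x, μ.prob X x ≠ 0 → g (f x) = x := by
    intro x hx
    obtain ⟨ω, hω, -⟩ := μ.prob_ne_zero_elim hx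
    rw [← hω, ← hf ω, ← hg ω]
  have claimD : ∀ y, μ.prob Y y ≠ 0 → f (g y) = y := by
    intro y hy
    obtain ⟨ω, hω, -⟩ := μ.prob_ne_zero_elim hy
    rw [← hω, ← hg ω, ← hf ω]
  have claimA : ∀ x, μ.prob X x ≠ 0 → μ.prob Y (f x) = μ.prob X x := by
    intro x hx
    unfold prob
    refine Finset.sum_congr rfl fun ω _ => ?_
    by_cases hp : μ.p ω = 0
    · split <;> split <;> simp [hp]
    · have : Y ω = f x ↔ X ω = x := by
        constructor
        · intro hyx
          have : g (Y ω) = g (f x) := by rw [hyx]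
          rw [← hg ω] at this
          rw [this, claimC x hx]
        · intro hxx; rw [hf ω, hxx]
      by_cases hxx : X ω = x
      · rw [if_pos hxx, if_pos (this.mpr hxx)]
      · rw [if_neg hxx, if_neg (fun hyx => hxx (this.mp hyx))]
  have claimB : ∀ y, μ.prob Y y ≠ 0 → μ.prob X (g y) = μ.prob Y y := by
    intro y hy
    unfold prob
    refine Finset.sum_congr rfl fun ω _ => ?_
    by_cases hp : μ.p ω = 0
    · split <;> split <;> simp [hp]
    · have : X ω = g y ↔ Y ω = y := by
        constructor
        · intro hxg
          have : f (X ω) = f (g y) := by rw [hxg]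
          rw [← hf ω] at this
          rw [this, claimD y hy]
        · intro hyy; rw [hg ω, hyy]
      by_cases hyy : Y ω = y
      · rw [if_pos (this.mpr hyy), if_pos hyy]
      · rw [if_neg (fun hxg => hyy (this.mp hxg)), if_neg hyy]
  rw [H_eq, H_eq]
  rw [← Finset.sum_filter_of_ne (p := fun x => μ.prob X x ≠ 0)
        (fun x _ hne h0 => hne (by simp [h0, Real.negMulLog_zero])),
      ← Finset.sum_filter_of_ne (p := fun y => μ.prob Y y ≠ 0)
        (fun y _ hne h0 => hne (by simp [h0, Real.negMulLog_zero]))]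
  refine Finset.sum_nbij' f g ?_ ?_ ?_ ?_ ?_
  · intro x hx
    simp only [Finset.mem_filter, Finset.mem_univ, true_and] at *
    rw [claimA x hx]; exact hx
  · intro y hy
    simp only [Finset.mem_filter, Finset.mem_univ, true_and] at *
    rw [claimB y hy]; exact hy
  · intro x hx
    simp only [Finset.mem_filter, Finset.mem_univ, true_and] at hx
    exact claimC x hx
  · intro y hy
    simp only [Finset.mem_filter, Finset.mem_univ, true_and] at hy
    exact claimD y hy
  · intro x hx
    simp only [Finset.mem_filter, Finset.mem_univ, true_and] at hx
    rw [claimA x hx]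

end FinPMF

-- ===== Gibbs / submodularity =====
namespace FinPMF
variable {Ω : Type*} [Fintype Ω] (μ : FinPMF Ω) {α β γ : Type*}

lemma master_gibbs {ι : Type*} [Fintype ι] (P Q : ι → ℝ)
    (hP : ∀ i, 0 ≤ P i) (hQ : ∀ i, 0 ≤ Q i) (hPQ : ∀ i, P i ≠ 0 → Q i ≠ 0) :
    ∑ i, P i * Real.log (Q i / P i) ≤ (∑ i, Q i) - (∑ i, P i) := by
  rw [← Finset.sum_sub_distrib]
  refine Finset.sum_le_sum fun i _ => ?_
  by_cases h : P i = 0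
  · simp [h, hQ i]
  · have hPpos : 0 < P i := lt_of_le_of_ne (hP i) (Ne.symm h)
    have hQpos : 0 < Q i := lt_of_le_of_ne (hQ i) (Ne.symm (hPQ i h))
    have hlog := Real.log_le_sub_one_of_pos (div_pos hQpos hPpos)
    calc P i * Real.log (Q i / P i) ≤ P i * (Q i / P i - 1) := by
          exact mul_le_mul_of_nonneg_left hlog (hP i)
      _ = Q i - P i := by field_simp
  
lemma sum_prob_pair_left [Fintype α] [DecidableEq α] [Fintype β] [DecidableEq β]
    (X : Ω → α) (Y : Ω → β) (y : β) :
    ∑ x, μ.prob (fun ω => (X ω, Y ω)) (x, y) = μ.prob Y y := by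
  unfold prob
  rw [Finset.sum_comm]
  refine Finset.sum_congr rfl fun ω _ => ?_
  rw [Finset.sum_eq_single (X ω)]
  · by_cases h : Y ω = y <;> simp [h]
  · intro x _ hx
    exact if_neg (fun hc : (X ω, Y ω) = (x, y) => hx (congrArg Prod.fst hc).symm)
  · simp

lemma sum_prob_pair_right [Fintype α] [DecidableEq α] [Fintype β] [DecidableEq β]
    (X : Ω → α) (Y : Ω → β) (x : α) :
    ∑ y, μ.prob (fun ω => (X ω, Y ω)) (x, y) = μ.prob X x := by
  unfold prob
  rw [Finset.sum_comm]
  refine Finset.sum_congr rfl fun ω _ => ?_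
  rw [Finset.sum_eq_single (Y ω)]
  · by_cases h : X ω = x <;> simp [h]
  · intro y _ hy
    exact if_neg (fun hc : (X ω, Y ω) = (x, y) => hy (congrArg Prod.snd hc).symm)
  · simp

lemma H_comp [Fintype α] [DecidableEq α] [Fintype β] [DecidableEq β]
    (X : Ω → α) (f : α → β) :
    μ.H (fun ω => f (X ω)) =
      ∑ x, -(μ.prob X x * Real.log (μ.prob (fun ω => f (X ω)) (f x))) := by
  unfold H
  have key : ∀ y : β, -(μ.prob (fun ω => f (X ω)) y * Real.log (μ.prob (fun ω => f (X ω)) y))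
      = ∑ x, if f x = y then -(μ.prob X x * Real.log (μ.prob (fun ω => f (X ω)) y)) else 0 := by
    intro y
    set c := Real.log (μ.prob (fun ω => f (X ω)) y) with hc
    rw [μ.prob_comp_apply X f y, Finset.sum_mul, ← Finset.sum_neg_distrib]
    refine Finset.sum_congr rfl fun x _ => ?_
    by_cases h : f x = y
    · simp [h]
    · simp [h]
  rw [Finset.sum_congr rfl fun y _ => key y, Finset.sum_comm]
  refine Finset.sum_congr rfl fun x _ => ?_
  rw [Finset.sum_eq_single (f x)]
  · rw [if_pos rfl]
  · intro b _ hb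
    exact if_neg (fun h => hb h.symm)
  · simp

end FinPMF

-- ===== submodularity & independence =====
namespace FinPMF
variable {Ω : Type*} [Fintype Ω] (μ : FinPMF Ω) {α β γ : Type*}
  [Fintype α] [DecidableEq α] [Fintype β] [DecidableEq β] [Fintype γ] [DecidableEq γ]

lemma prob_pos_of_ne [DecidableEq α] {X : Ω → α} {x : α} (h : μ.prob X x ≠ 0) :
    0 < μ.prob X x := lt_of_le_of_ne (μ.prob_nonneg X x) (Ne.symm h)

lemma H_submod (X : Ω → α) (Y : Ω → β) (Z : Ω → γ) :
    μ.H (fun ω => (X ω, Y ω, Z ω)) + μ.H Y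
      ≤ μ.H (fun ω => (X ω, Y ω)) + μ.H (fun ω => (Y ω, Z ω)) := by
  set T : Ω → α × β × γ := fun ω => (X ω, Y ω, Z ω) with hT
  set P : α × β × γ → ℝ := μ.prob T with hP
  set pXY : α × β → ℝ := μ.prob (fun ω => (X ω, Y ω)) with hpXY
  set pYZ : β × γ → ℝ := μ.prob (fun ω => (Y ω, Z ω)) with hpYZ
  set pY : β → ℝ := μ.prob Y with hpY
  have hXY : μ.H (fun ω => (X ω, Y ω)) = ∑ t : α × β × γ, -(P t * Real.log (pXY (t.1, t.2.1))) :=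
    μ.H_comp T (fun t => (t.1, t.2.1))
  have hYZ : μ.H (fun ω => (Y ω, Z ω)) = ∑ t : α × β × γ, -(P t * Real.log (pYZ (t.2.1, t.2.2))) :=
    μ.H_comp T (fun t => (t.2.1, t.2.2))
  have hY : μ.H Y = ∑ t : α × β × γ, -(P t * Real.log (pY t.2.1)) :=
    μ.H_comp T (fun t => t.2.1)
  have hHT : μ.H T = ∑ t : α × β × γ, -(P t * Real.log (P t)) := rfl
  rw [hXY, hYZ, hY, hHT, ← Finset.sum_add_distrib, ← Finset.sum_add_distrib]
  set Q : α × β × γ → ℝ := fun t => pXY (t.1, t.2.1) * pYZ (t.2.1, t.2.2) / pY t.2.1 with hQ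
  have hPn : ∀ t, 0 ≤ P t := fun t => μ.prob_nonneg T t
  have hQn : ∀ t, 0 ≤ Q t := fun t =>
    div_nonneg (mul_nonneg (μ.prob_nonneg _ _) (μ.prob_nonneg _ _)) (μ.prob_nonneg _ _)
  have hm1 : ∀ t : α × β × γ, P t ≤ pXY (t.1, t.2.1) := fun t => μ.prob_mono T (fun t => (t.1, t.2.1)) t
  have hm2 : ∀ t : α × β × γ, P t ≤ pYZ (t.2.1, t.2.2) := fun t => μ.prob_mono T (fun t => (t.2.1, t.2.2)) t
  have hm3 : ∀ t : α × β × γ, P t ≤ pY t.2.1 := fun t => μ.prob_mono T (fun t => t.2.1) t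
  have hPQ : ∀ t, P t ≠ 0 → Q t ≠ 0 := by
    intro t h
    have hp := μ.prob_pos_of_ne (X := T) h
    exact ne_of_gt (div_pos (mul_pos (lt_of_lt_of_le hp (hm1 t)) (lt_of_lt_of_le hp (hm2 t)))
      (lt_of_lt_of_le hp (hm3 t)))
  have key := master_gibbs P Q hPn hQn hPQ
  have hPsum : ∑ t, P t = 1 := μ.sum_prob T
  have hQsum : ∑ t, Q t ≤ 1 := by
    have e1 : ∑ t : α × β × γ, Q t
        = ∑ x : α, ∑ y : β, ∑ z : γ, pXY (x, y) * pYZ (y, z) / pY y := by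
      rw [Fintype.sum_prod_type]
      refine Finset.sum_congr rfl fun x _ => ?_
      rw [Fintype.sum_prod_type]
    rw [e1, Finset.sum_comm]
    have e2 : ∀ y : β, ∑ x : α, ∑ z : γ, pXY (x, y) * pYZ (y, z) / pY y
        = pY y * pY y / pY y := by
      intro y
      have : (∑ x : α, pXY (x, y)) * (∑ z : γ, pYZ (y, z)) / pY y
          = ∑ x : α, ∑ z : γ, pXY (x, y) * pYZ (y, z) / pY y := by
        rw [Finset.sum_mul, Finset.sum_div]
        refine Finset.sum_congr rfl fun x _ => ?_
        rw [Finset.mul_sum, Finset.sum_div]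
      rw [← this, μ.sum_prob_pair_left X Y y, μ.sum_prob_pair_right Y Z y]
    rw [Finset.sum_congr rfl fun y _ => e2 y]
    calc ∑ y : β, pY y * pY y / pY y ≤ ∑ y : β, pY y := by
          refine Finset.sum_le_sum fun y _ => ?_
          by_cases h : pY y = 0
          · simp [h]
          · rw [mul_div_assoc, div_self h, mul_one]
      _ = 1 := μ.sum_prob Y
  have hterm : ∀ t : α × β × γ, P t * Real.log (Q t / P t)
      = (-(P t * Real.log (P t)) + -(P t * Real.log (pY t.2.1)))
        - (-(P t * Real.log (pXY (t.1, t.2.1))) + -(P t * Real.log (pYZ (t.2.1, t.2.2)))) := by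
    intro t
    by_cases h : P t = 0
    · simp [h]
    · have hp := μ.prob_pos_of_ne (X := T) h
      have h1 : pXY (t.1, t.2.1) ≠ 0 := ne_of_gt (lt_of_lt_of_le hp (hm1 t))
      have h2 : pYZ (t.2.1, t.2.2) ≠ 0 := ne_of_gt (lt_of_lt_of_le hp (hm2 t))
      have h3 : pY t.2.1 ≠ 0 := ne_of_gt (lt_of_lt_of_le hp (hm3 t))
      have hQt : Q t = pXY (t.1, t.2.1) * pYZ (t.2.1, t.2.2) / pY t.2.1 := rfl
      rw [hQt, div_div, Real.log_div (mul_ne_zero h1 h2) (mul_ne_zero h3 h),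
        Real.log_mul h1 h2, Real.log_mul h3 h]
      ring
  have : ∑ t, P t * Real.log (Q t / P t)
      = (∑ t : α × β × γ, (-(P t * Real.log (P t)) + -(P t * Real.log (pY t.2.1))))
        - ∑ t : α × β × γ, (-(P t * Real.log (pXY (t.1, t.2.1))) + -(P t * Real.log (pYZ (t.2.1, t.2.2)))) := by
    rw [← Finset.sum_sub_distrib]
    exact Finset.sum_congr rfl fun t _ => hterm t
  rw [this] at key
  linarith

lemma H_unit : μ.H (fun _ : Ω => ()) = 0 := by
  have h1 : μ.prob (fun _ : Ω => ()) () = 1 := by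
    unfold prob; simp [μ.sum_one]
  unfold H
  simp [h1]

lemma H_pair_of_indep {X : Ω → α} {Y : Ω → β} (h : μ.Indep X Y) :
    μ.H (fun ω => (X ω, Y ω)) = μ.H X + μ.H Y := by
  rw [H_eq, H_eq, H_eq, Fintype.sum_prod_type]
  have : ∀ x : α, ∑ y : β, Real.negMulLog (μ.prob (fun ω => (X ω, Y ω)) (x, y))
      = ∑ y : β, (μ.prob Y y * Real.negMulLog (μ.prob X x) + μ.prob X x * Real.negMulLog (μ.prob Y y)) := by
    intro x
    refine Finset.sum_congr rfl fun y _ => ?_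
    rw [h x y, Real.negMulLog_mul]
  rw [Finset.sum_congr rfl fun x _ => this x]
  have : ∀ x : α, ∑ y : β, (μ.prob Y y * Real.negMulLog (μ.prob X x) + μ.prob X x * Real.negMulLog (μ.prob Y y))
      = Real.negMulLog (μ.prob X x) + μ.prob X x * (∑ y, Real.negMulLog (μ.prob Y y)) := by
    intro x
    rw [Finset.sum_add_distrib, ← Finset.sum_mul, ← Finset.mul_sum, μ.sum_prob Y, one_mul]
  rw [Finset.sum_congr rfl fun x _ => this x, Finset.sum_add_distrib, ← Finset.sum_mul, μ.sum_prob X,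
    one_mul]

lemma H_condIndep {A : Ω → α} {B : Ω → β} {C : Ω → γ} (h : μ.CondIndep A B C) :
    μ.H (fun ω => (A ω, B ω, C ω)) + μ.H B
      = μ.H (fun ω => (A ω, B ω)) + μ.H (fun ω => (B ω, C ω)) := by
  set T : Ω → α × β × γ := fun ω => (A ω, B ω, C ω) with hT
  set P : α × β × γ → ℝ := μ.prob T with hP
  set pAB : α × β → ℝ := μ.prob (fun ω => (A ω, B ω)) with hpAB
  set pBC : β × γ → ℝ := μ.prob (fun ω => (B ω, C ω)) with hpBC
  set pB : β → ℝ := μ.prob B with hpB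
  have hAB : μ.H (fun ω => (A ω, B ω)) = ∑ t : α × β × γ, -(P t * Real.log (pAB (t.1, t.2.1))) :=
    μ.H_comp T (fun t => (t.1, t.2.1))
  have hBC : μ.H (fun ω => (B ω, C ω)) = ∑ t : α × β × γ, -(P t * Real.log (pBC (t.2.1, t.2.2))) :=
    μ.H_comp T (fun t => (t.2.1, t.2.2))
  have hB : μ.H B = ∑ t : α × β × γ, -(P t * Real.log (pB t.2.1)) :=
    μ.H_comp T (fun t => t.2.1)
  have hHT : μ.H T = ∑ t : α × β × γ, -(P t * Real.log (P t)) := rfl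
  rw [hAB, hBC, hB, hHT, ← Finset.sum_add_distrib, ← Finset.sum_add_distrib]
  refine Finset.sum_congr rfl fun t _ => ?_
  by_cases hz : P t = 0
  · simp [hz]
  · have hp := μ.prob_pos_of_ne (X := T) hz
    have h1 : pAB (t.1, t.2.1) ≠ 0 :=
      ne_of_gt (lt_of_lt_of_le hp (μ.prob_mono T (fun t => (t.1, t.2.1)) t))
    have h2 : pBC (t.2.1, t.2.2) ≠ 0 :=
      ne_of_gt (lt_of_lt_of_le hp (μ.prob_mono T (fun t => (t.2.1, t.2.2)) t))
    have h3 : pB t.2.1 ≠ 0 :=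
      ne_of_gt (lt_of_lt_of_le hp (μ.prob_mono T (fun t => t.2.1) t))
    have heq : P t * pB t.2.1 = pAB (t.1, t.2.1) * pBC (t.2.1, t.2.2) := h t.1 t.2.1 t.2.2
    have hlog : Real.log (P t) + Real.log (pB t.2.1)
        = Real.log (pAB (t.1, t.2.1)) + Real.log (pBC (t.2.1, t.2.2)) := by
      rw [← Real.log_mul hz h3, ← Real.log_mul h1 h2, heq]
    nlinarith [hlog, hp]
end FinPMF

-- ===== mutual information layer =====
namespace FinPMF
variable {Ω : Type*} [Fintype Ω] (μ : FinPMF Ω) {α β γ δ : Type*}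
  [Fintype α] [DecidableEq α] [Fintype β] [DecidableEq β] [Fintype γ] [DecidableEq γ]
  [Fintype δ] [DecidableEq δ]

lemma mutInfo_congr {A : Ω → α} {A' : Ω → β} {C : Ω → γ} {C' : Ω → δ}
    (hA : MutDet A A') (hC : MutDet C C') : μ.mutInfo A C = μ.mutInfo A' C' := by
  unfold mutInfo
  rw [μ.H_congr hA, μ.H_congr hC, μ.H_congr (hA.pair hC)]

lemma mutInfo_comm (A : Ω → α) (C : Ω → γ) : μ.mutInfo A C = μ.mutInfo C A := by
  unfold mutInfo
  rw [μ.H_congr (MutDet.swap A C)]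
  ring

lemma mutInfo_nonneg (X : Ω → α) (Z : Ω → γ) : 0 ≤ μ.mutInfo X Z := by
  have hsub := μ.H_submod X (fun _ => ()) Z
  have h1 : μ.H (fun ω => (X ω, (), Z ω)) = μ.H (fun ω => (X ω, Z ω)) :=
    μ.H_congr ⟨⟨fun p => (p.1, p.2.2), fun _ => rfl⟩, ⟨fun p => (p.1, (), p.2), fun _ => rfl⟩⟩
  have h2 : μ.H (fun ω => (X ω, ())) = μ.H X :=
    μ.H_congr ⟨⟨fun p => p.1, fun _ => rfl⟩, ⟨fun x => (x, ()), fun _ => rfl⟩⟩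
  have h3 : μ.H (fun ω => ((), Z ω)) = μ.H Z :=
    μ.H_congr ⟨⟨fun p => p.2, fun _ => rfl⟩, ⟨fun z => ((), z), fun _ => rfl⟩⟩
  have h4 : μ.H (fun _ : Ω => ()) = 0 := μ.H_unit
  unfold mutInfo
  rw [h1, h2, h3, h4] at hsub
  linarith

/-- `I(A;C) ≤ I((A,B);C)` -/
lemma mutInfo_le_pair_left (A : Ω → α) (B : Ω → β) (C : Ω → γ) :
    μ.mutInfo A C ≤ μ.mutInfo (fun ω => (A ω, B ω)) C := by
  have hsub := μ.H_submod B A C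
  have h1 : μ.H (fun ω => (B ω, A ω, C ω)) = μ.H (fun ω => ((A ω, B ω), C ω)) :=
    μ.H_congr ⟨⟨fun p => ((p.2.1, p.1), p.2.2), fun _ => rfl⟩,
      ⟨fun p => (p.1.2, p.1.1, p.2), fun _ => rfl⟩⟩
  have h2 : μ.H (fun ω => (B ω, A ω)) = μ.H (fun ω => (A ω, B ω)) := μ.H_congr (MutDet.swap B A)
  unfold mutInfo
  rw [h1, h2] at hsub
  linarith

lemma mutInfo_le_pair_right (A : Ω → α) (B : Ω → β) (C : Ω → γ) :
    μ.mutInfo A C ≤ μ.mutInfo A (fun ω => (B ω, C ω)) := by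
  rw [μ.mutInfo_comm A C, μ.mutInfo_comm A]
  have := μ.mutInfo_le_pair_left C B A
  have hswap : μ.mutInfo (fun ω => (C ω, B ω)) A = μ.mutInfo (fun ω => (B ω, C ω)) A :=
    μ.mutInfo_congr (MutDet.swap C B) (MutDet.refl A)
  linarith

/-- chain identity: `I(A;(B,C)) = I(A;B) + I((A,B);C) − I(B;C)` -/
lemma mutInfo_chain (A : Ω → α) (B : Ω → β) (C : Ω → γ) :
    μ.mutInfo A (fun ω => (B ω, C ω))
      = μ.mutInfo A B + μ.mutInfo (fun ω => (A ω, B ω)) C - μ.mutInfo B C := by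
  have hassoc : μ.H (fun ω => ((A ω, B ω), C ω)) = μ.H (fun ω => (A ω, (B ω, C ω))) :=
    μ.H_congr ⟨⟨fun p => (p.1.1, (p.1.2, p.2)), fun _ => rfl⟩,
      ⟨fun p => ((p.1, p.2.1), p.2.2), fun _ => rfl⟩⟩
  unfold mutInfo
  rw [← hassoc]
  ring

/-- if `I(A;(B,C)) ≤ 0` then `I((A,B);C) ≤ I(B;C)` -/
lemma mutInfo_drop_left {A : Ω → α} {B : Ω → β} {C : Ω → γ}
    (h : μ.mutInfo A (fun ω => (B ω, C ω)) ≤ 0) :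
    μ.mutInfo (fun ω => (A ω, B ω)) C ≤ μ.mutInfo B C := by
  have hc := μ.mutInfo_chain A B C
  have h1 := μ.mutInfo_nonneg A B
  linarith

/-- Markov bound: given the conditional-independence entropy identity for `(A,K,C)`,
`I(A;C) ≤ I(A;K)`. -/
lemma mutInfo_markov {A : Ω → α} {K : Ω → β} {C : Ω → γ}
    (h : μ.H (fun ω => (A ω, K ω, C ω)) + μ.H K
        = μ.H (fun ω => (A ω, K ω)) + μ.H (fun ω => (K ω, C ω))) :
    μ.mutInfo A C ≤ μ.mutInfo A K := by
  have h1 : μ.mutInfo A C ≤ μ.mutInfo A (fun ω => (K ω, C ω)) := μ.mutInfo_le_pair_right A K C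
  have h2 : μ.mutInfo A (fun ω => (K ω, C ω)) = μ.mutInfo A K := by
    have hassoc : μ.H (fun ω => (A ω, (K ω, C ω))) = μ.H (fun ω => (A ω, K ω, C ω)) :=
      μ.H_congr (MutDet.refl _)
    unfold mutInfo
    rw [hassoc]
    linarith
  linarith

/-- given the conditional-independence entropy identity for `(A,B,C)`, `I((A,B);C) ≤ I(B;C)`. -/
lemma mutInfo_drop_left_markov {A : Ω → α} {B : Ω → β} {C : Ω → γ}
    (h : μ.H (fun ω => (A ω, B ω, C ω)) + μ.H B
        = μ.H (fun ω => (A ω, B ω)) + μ.H (fun ω => (B ω, C ω))) :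
    μ.mutInfo (fun ω => (A ω, B ω)) C ≤ μ.mutInfo B C := by
  have hassoc : μ.H (fun ω => ((A ω, B ω), C ω)) = μ.H (fun ω => (A ω, B ω, C ω)) :=
    μ.H_congr (MutDet.assoc A B C)
  unfold mutInfo
  rw [hassoc]
  linarith

end FinPMF

end AuxiliaryLemmas

set_option maxHeartbeats 4000000
set_option synthInstance.maxHeartbeats 2000000
set_option synthInstance.maxSize 4096

/-- Aggregate block-Markov secrecy bound. Blocks are indexed by `b ∈ {1,…,B}`
(index `0` is reserved for the constant initial key `K 0`). Tuples `X_{i:j}` are encoded as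
functions `fun t : Fin (j+1-i) => X (i+t)`. Under the stated independence/Markov assumptions,
`I(W_{1:B}, L_{1:B}; Z_{1:B})
  ≤ Σ_{b=1}^{B−1} [I(W_{b+1}, L_{b+1}; Z_{b+1}) + I(W_b, L_b, Z_b, K_{b−1}; K_b)]`. -/
theorem stmt_11 {Ω : Type*} [Fintype Ω]
    {𝒲 𝓛 𝒵 𝒦 : ℕ → Type*}
    [∀ b, Fintype (𝒲 b)] [∀ b, DecidableEq (𝒲 b)]
    [∀ b, Fintype (𝓛 b)] [∀ b, DecidableEq (𝓛 b)]
    [∀ b, Fintype (𝒵 b)] [∀ b, DecidableEq (𝒵 b)]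
    [∀ b, Fintype (𝒦 b)] [∀ b, DecidableEq (𝒦 b)]
    {B : ℕ} (hB : 2 ≤ B)
    (μ : FinPMF Ω)
    (W : ∀ b, Ω → 𝒲 b) (L : ∀ b, Ω → 𝓛 b) (Z : ∀ b, Ω → 𝒵 b) (K : ∀ b, Ω → 𝒦 b)
    -- `K 0` is a constant random variable
    (hK0 : ∀ ω ω', K 0 ω = K 0 ω')
    -- (i) no secure message in the first block: `W 1` and `L 1` are constant
    (hW1 : ∀ ω ω', W 1 ω = W 1 ω') (hL1 : ∀ ω ω', L 1 ω = L 1 ω')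
    -- (ii) future messages `(W_{b+2:B}, L_{b+2:B})` are independent of
    -- `(Z_{1:b+1}, W_{1:b+1}, L_{1:b+1})`
    (hfut : ∀ b ∈ Finset.Icc 1 (B - 1),
      μ.Indep
        (fun ω =>
          ((fun t : Fin (B + 1 - (b + 2)) => W (b + 2 + t.val) ω),
           (fun t : Fin (B + 1 - (b + 2)) => L (b + 2 + t.val) ω)))
        (fun ω =>
          ((fun t : Fin (b + 1) => Z (1 + t.val) ω),
           (fun t : Fin (b + 1) => W (1 + t.val) ω),
           (fun t : Fin (b + 1) => L (1 + t.val) ω))))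
    -- (iii) Markov chain `(W_{1:b}, L_{1:b}, Z_{1:b}) − K_b − (Z_{b+1}, W_{b+1}, L_{b+1})`
    (hkey : ∀ b ∈ Finset.Icc 1 (B - 1),
      μ.CondIndep
        (fun ω =>
          ((fun t : Fin b => W (1 + t.val) ω),
           (fun t : Fin b => L (1 + t.val) ω),
           (fun t : Fin b => Z (1 + t.val) ω)))
        (K b)
        (fun ω => (Z (b + 1) ω, W (b + 1) ω, L (b + 1) ω)))
    -- (iv) Markov chain `(W_{1:b−1}, L_{1:b−1}, Z_{1:b−1}) − (W_b, L_b, Z_b, K_{b−1}) − K_b`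
    (hkey' : ∀ b ∈ Finset.Icc 1 (B - 1),
      μ.CondIndep
        (fun ω =>
          ((fun t : Fin (b - 1) => W (1 + t.val) ω),
           (fun t : Fin (b - 1) => L (1 + t.val) ω),
           (fun t : Fin (b - 1) => Z (1 + t.val) ω)))
        (fun ω => (W b ω, L b ω, Z b ω, K (b - 1) ω))
        (K b)) :
    μ.mutInfo
        (fun ω =>
          ((fun t : Fin B => W (1 + t.val) ω),
           (fun t : Fin B => L (1 + t.val) ω)))
        (fun ω => (fun t : Fin B => Z (1 + t.val) ω))
      ≤ ∑ b ∈ Finset.Icc 1 (B - 1),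
          (μ.mutInfo (fun ω => (W (b + 1) ω, L (b + 1) ω)) (Z (b + 1))
            + μ.mutInfo (fun ω => (W b ω, L b ω, Z b ω, K (b - 1) ω)) (K b)) := by
  classical
  have hne : Nonempty Ω := μ.nonempty_omega
  -- ===== per-block bound =====
  have block : ∀ b, 1 ≤ b → b ≤ B - 1 →
      μ.mutInfo (fun ω => ((tupFrom W 1 B ω, tupFrom L 1 B ω), tupFrom Z 1 b ω)) (Z (b + 1))
        ≤ μ.mutInfo (fun ω => (W (b + 1) ω, L (b + 1) ω)) (Z (b + 1))
          + μ.mutInfo (fun ω => (W b ω, L b ω, Z b ω, K (b - 1) ω)) (K b) := by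
    intro b hb1 hb2
    have hbm : b ∈ Finset.Icc 1 (B - 1) := Finset.mem_Icc.mpr ⟨hb1, hb2⟩
    have sW : MutDet (tupFrom W 1 B)
        (fun ω => ((tupFrom W 1 b ω, W (b + 1) ω), tupFrom W (b + 2) (B + 1 - (b + 2)) ω)) :=
      ((mutDet_tup_congr W rfl (by omega : B = (b + 1) + (B - (b + 1)))).trans
        (mutDet_split W 1 (b + 1) (B - (b + 1)))).trans
        (MutDet.pair
          ((mutDet_split W 1 b 1).trans ((MutDet.refl _).pair
            ((mutDet_single W (1 + b)).trans (mutDet_index W (by omega)))))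
          (mutDet_tup_congr W (by omega) (by omega)))
    have sL : MutDet (tupFrom L 1 B)
        (fun ω => ((tupFrom L 1 b ω, L (b + 1) ω), tupFrom L (b + 2) (B + 1 - (b + 2)) ω)) :=
      ((mutDet_tup_congr L rfl (by omega : B = (b + 1) + (B - (b + 1)))).trans
        (mutDet_split L 1 (b + 1) (B - (b + 1)))).trans
        (MutDet.pair
          ((mutDet_split L 1 b 1).trans ((MutDet.refl _).pair
            ((mutDet_single L (1 + b)).trans (mutDet_index L (by omega)))))
          (mutDet_tup_congr L (by omega) (by omega)))
    have sW1 : MutDet (tupFrom W 1 (b + 1)) (fun ω => (tupFrom W 1 b ω, W (b + 1) ω)) :=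
      (mutDet_split W 1 b 1).trans ((MutDet.refl _).pair
        ((mutDet_single W (1 + b)).trans (mutDet_index W (by omega))))
    have sL1 : MutDet (tupFrom L 1 (b + 1)) (fun ω => (tupFrom L 1 b ω, L (b + 1) ω)) :=
      (mutDet_split L 1 b 1).trans ((MutDet.refl _).pair
        ((mutDet_single L (1 + b)).trans (mutDet_index L (by omega))))
    have sZ1 : MutDet (tupFrom Z 1 (b + 1)) (fun ω => (tupFrom Z 1 b ω, Z (b + 1) ω)) :=
      (mutDet_split Z 1 b 1).trans ((MutDet.refl _).pair
        ((mutDet_single Z (1 + b)).trans (mutDet_index Z (by omega))))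
    have sWp : MutDet (tupFrom W 1 b) (fun ω => (tupFrom W 1 (b - 1) ω, W b ω)) :=
      ((mutDet_tup_congr W rfl (by omega : b = (b - 1) + 1)).trans
        (mutDet_split W 1 (b - 1) 1)).trans ((MutDet.refl _).pair
        ((mutDet_single W (1 + (b - 1))).trans (mutDet_index W (by omega))))
    have sLp : MutDet (tupFrom L 1 b) (fun ω => (tupFrom L 1 (b - 1) ω, L b ω)) :=
      ((mutDet_tup_congr L rfl (by omega : b = (b - 1) + 1)).trans
        (mutDet_split L 1 (b - 1) 1)).trans ((MutDet.refl _).pair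
        ((mutDet_single L (1 + (b - 1))).trans (mutDet_index L (by omega))))
    have sZp : MutDet (tupFrom Z 1 b) (fun ω => (tupFrom Z 1 (b - 1) ω, Z b ω)) :=
      ((mutDet_tup_congr Z rfl (by omega : b = (b - 1) + 1)).trans
        (mutDet_split Z 1 (b - 1) 1)).trans ((MutDet.refl _).pair
        ((mutDet_single Z (1 + (b - 1))).trans (mutDet_index Z (by omega))))
    -- step 1: regroup full tuple
    have md1 : MutDet
        (fun ω => ((tupFrom W 1 B ω, tupFrom L 1 B ω), tupFrom Z 1 b ω))
        (fun ω => ((tupFrom W (b + 2) (B + 1 - (b + 2)) ω, tupFrom L (b + 2) (B + 1 - (b + 2)) ω),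
          ((W (b + 1) ω, L (b + 1) ω),
            (tupFrom W 1 b ω, tupFrom L 1 b ω, tupFrom Z 1 b ω)))) :=
      ((sW.pair sL).pair (MutDet.refl (tupFrom Z 1 b))).trans
        ⟨⟨fun p => ((p.1.1.2, p.1.2.2), ((p.1.1.1.2, p.1.2.1.2), (p.1.1.1.1, p.1.2.1.1, p.2))),
            fun _ => rfl⟩,
         ⟨fun q => ((((q.2.2.1, q.2.1.1), q.1.1), ((q.2.2.2.1, q.2.1.2), q.1.2)), q.2.2.2.2),
            fun _ => rfl⟩⟩
    have e1 : μ.mutInfo (fun ω => ((tupFrom W 1 B ω, tupFrom L 1 B ω), tupFrom Z 1 b ω)) (Z (b + 1))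
        = μ.mutInfo
            (fun ω => ((tupFrom W (b + 2) (B + 1 - (b + 2)) ω, tupFrom L (b + 2) (B + 1 - (b + 2)) ω),
              ((W (b + 1) ω, L (b + 1) ω), (tupFrom W 1 b ω, tupFrom L 1 b ω, tupFrom Z 1 b ω))))
            (Z (b + 1)) := μ.mutInfo_congr md1 (MutDet.refl _)
    -- independence of future messages
    have hiBig : μ.mutInfo
        (fun ω => (tupFrom W (b + 2) (B + 1 - (b + 2)) ω, tupFrom L (b + 2) (B + 1 - (b + 2)) ω))
        (fun ω => (tupFrom Z 1 (b + 1) ω, tupFrom W 1 (b + 1) ω, tupFrom L 1 (b + 1) ω)) = 0 := by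
      have h : μ.H (fun ω =>
            ((tupFrom W (b + 2) (B + 1 - (b + 2)) ω, tupFrom L (b + 2) (B + 1 - (b + 2)) ω),
              (tupFrom Z 1 (b + 1) ω, tupFrom W 1 (b + 1) ω, tupFrom L 1 (b + 1) ω)))
          = μ.H (fun ω => (tupFrom W (b + 2) (B + 1 - (b + 2)) ω, tupFrom L (b + 2) (B + 1 - (b + 2)) ω))
            + μ.H (fun ω => (tupFrom Z 1 (b + 1) ω, tupFrom W 1 (b + 1) ω, tupFrom L 1 (b + 1) ω)) :=
        μ.H_pair_of_indep (hfut b hbm)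
      unfold FinPMF.mutInfo
      linarith
    have mdEC : MutDet
        (fun ω => (((W (b + 1) ω, L (b + 1) ω),
            (tupFrom W 1 b ω, tupFrom L 1 b ω, tupFrom Z 1 b ω)), Z (b + 1) ω))
        (fun ω => (tupFrom Z 1 (b + 1) ω, tupFrom W 1 (b + 1) ω, tupFrom L 1 (b + 1) ω)) := by
      refine MutDet.trans ?_ (sZ1.pair (sW1.pair sL1)).symm
      exact ⟨⟨fun p => ((p.1.2.2.2, p.2), ((p.1.2.1, p.1.1.1), (p.1.2.2.1, p.1.1.2))),
          fun _ => rfl⟩,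
        ⟨fun q => (((q.2.1.2, q.2.2.2), (q.2.1.1, (q.2.2.1, q.1.1))), q.1.2), fun _ => rfl⟩⟩
    have hd1 : μ.mutInfo
        (fun ω => ((tupFrom W (b + 2) (B + 1 - (b + 2)) ω, tupFrom L (b + 2) (B + 1 - (b + 2)) ω),
          ((W (b + 1) ω, L (b + 1) ω), (tupFrom W 1 b ω, tupFrom L 1 b ω, tupFrom Z 1 b ω))))
        (Z (b + 1))
        ≤ μ.mutInfo (fun ω => ((W (b + 1) ω, L (b + 1) ω),
            (tupFrom W 1 b ω, tupFrom L 1 b ω, tupFrom Z 1 b ω))) (Z (b + 1)) := by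
      refine μ.mutInfo_drop_left ?_
      have ec : μ.mutInfo
          (fun ω => (tupFrom W (b + 2) (B + 1 - (b + 2)) ω, tupFrom L (b + 2) (B + 1 - (b + 2)) ω))
          (fun ω => (((W (b + 1) ω, L (b + 1) ω),
            (tupFrom W 1 b ω, tupFrom L 1 b ω, tupFrom Z 1 b ω)), Z (b + 1) ω))
          = μ.mutInfo
            (fun ω => (tupFrom W (b + 2) (B + 1 - (b + 2)) ω, tupFrom L (b + 2) (B + 1 - (b + 2)) ω))
            (fun ω => (tupFrom Z 1 (b + 1) ω, tupFrom W 1 (b + 1) ω, tupFrom L 1 (b + 1) ω)) :=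
        μ.mutInfo_congr (MutDet.refl _) mdEC
      exact le_of_eq (ec.trans hiBig)
    -- swap and chain
    have eswap : μ.mutInfo (fun ω => ((W (b + 1) ω, L (b + 1) ω),
          (tupFrom W 1 b ω, tupFrom L 1 b ω, tupFrom Z 1 b ω))) (Z (b + 1))
        = μ.mutInfo (fun ω => ((tupFrom W 1 b ω, tupFrom L 1 b ω, tupFrom Z 1 b ω),
            (W (b + 1) ω, L (b + 1) ω))) (Z (b + 1)) :=
      μ.mutInfo_congr (MutDet.swap _ _) (MutDet.refl _)
    have hch : μ.mutInfo (fun ω => (tupFrom W 1 b ω, tupFrom L 1 b ω, tupFrom Z 1 b ω))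
          (fun ω => ((W (b + 1) ω, L (b + 1) ω), Z (b + 1) ω))
        = μ.mutInfo (fun ω => (tupFrom W 1 b ω, tupFrom L 1 b ω, tupFrom Z 1 b ω))
            (fun ω => (W (b + 1) ω, L (b + 1) ω))
          + μ.mutInfo (fun ω => ((tupFrom W 1 b ω, tupFrom L 1 b ω, tupFrom Z 1 b ω),
              (W (b + 1) ω, L (b + 1) ω))) (Z (b + 1))
          - μ.mutInfo (fun ω => (W (b + 1) ω, L (b + 1) ω)) (Z (b + 1)) :=
      μ.mutInfo_chain _ _ _
    have hnn1 := μ.mutInfo_nonneg (fun ω => (tupFrom W 1 b ω, tupFrom L 1 b ω, tupFrom Z 1 b ω))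
      (fun ω => (W (b + 1) ω, L (b + 1) ω))
    -- markov via hkey
    have hkH : μ.H (fun ω => ((tupFrom W 1 b ω, tupFrom L 1 b ω, tupFrom Z 1 b ω), K b ω,
          (Z (b + 1) ω, W (b + 1) ω, L (b + 1) ω))) + μ.H (K b)
        = μ.H (fun ω => ((tupFrom W 1 b ω, tupFrom L 1 b ω, tupFrom Z 1 b ω), K b ω))
          + μ.H (fun ω => (K b ω, (Z (b + 1) ω, W (b + 1) ω, L (b + 1) ω))) :=
      μ.H_condIndep (hkey b hbm)
    have hmar : μ.mutInfo (fun ω => (tupFrom W 1 b ω, tupFrom L 1 b ω, tupFrom Z 1 b ω))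
          (fun ω => (Z (b + 1) ω, W (b + 1) ω, L (b + 1) ω))
        ≤ μ.mutInfo (fun ω => (tupFrom W 1 b ω, tupFrom L 1 b ω, tupFrom Z 1 b ω)) (K b) :=
      μ.mutInfo_markov hkH
    have eDC : μ.mutInfo (fun ω => (tupFrom W 1 b ω, tupFrom L 1 b ω, tupFrom Z 1 b ω))
          (fun ω => ((W (b + 1) ω, L (b + 1) ω), Z (b + 1) ω))
        = μ.mutInfo (fun ω => (tupFrom W 1 b ω, tupFrom L 1 b ω, tupFrom Z 1 b ω))
            (fun ω => (Z (b + 1) ω, W (b + 1) ω, L (b + 1) ω)) :=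
      μ.mutInfo_congr (MutDet.refl _)
        ⟨⟨fun p => (p.2, p.1.1, p.1.2), fun _ => rfl⟩,
         ⟨fun q => ((q.2.1, q.2.2), q.1), fun _ => rfl⟩⟩
    have hp5 : μ.mutInfo (fun ω => (tupFrom W 1 b ω, tupFrom L 1 b ω, tupFrom Z 1 b ω)) (K b)
        ≤ μ.mutInfo (fun ω => ((tupFrom W 1 b ω, tupFrom L 1 b ω, tupFrom Z 1 b ω), K (b - 1) ω))
            (K b) :=
      μ.mutInfo_le_pair_left _ _ _
    -- step 6 via hkey'
    have hk2 : μ.H (fun ω => ((tupFrom W 1 (b - 1) ω, tupFrom L 1 (b - 1) ω, tupFrom Z 1 (b - 1) ω),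
          (W b ω, L b ω, Z b ω, K (b - 1) ω), K b ω))
          + μ.H (fun ω => (W b ω, L b ω, Z b ω, K (b - 1) ω))
        = μ.H (fun ω => ((tupFrom W 1 (b - 1) ω, tupFrom L 1 (b - 1) ω, tupFrom Z 1 (b - 1) ω),
            (W b ω, L b ω, Z b ω, K (b - 1) ω)))
          + μ.H (fun ω => ((W b ω, L b ω, Z b ω, K (b - 1) ω), K b ω)) :=
      μ.H_condIndep (hkey' b hbm)
    have hd2 : μ.mutInfo (fun ω => ((tupFrom W 1 (b - 1) ω, tupFrom L 1 (b - 1) ω, tupFrom Z 1 (b - 1) ω),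
          (W b ω, L b ω, Z b ω, K (b - 1) ω))) (K b)
        ≤ μ.mutInfo (fun ω => (W b ω, L b ω, Z b ω, K (b - 1) ω)) (K b) :=
      μ.mutInfo_drop_left_markov hk2
    have md6 : MutDet
        (fun ω => ((tupFrom W 1 b ω, tupFrom L 1 b ω, tupFrom Z 1 b ω), K (b - 1) ω))
        (fun ω => ((tupFrom W 1 (b - 1) ω, tupFrom L 1 (b - 1) ω, tupFrom Z 1 (b - 1) ω),
          (W b ω, L b ω, Z b ω, K (b - 1) ω))) :=
      ((sWp.pair (sLp.pair sZp)).pair (MutDet.refl (K (b - 1)))).trans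
        ⟨⟨fun p => ((p.1.1.1, p.1.2.1.1, p.1.2.2.1), (p.1.1.2, p.1.2.1.2, p.1.2.2.2, p.2)),
            fun _ => rfl⟩,
         ⟨fun q => (((q.1.1, q.2.1), ((q.1.2.1, q.2.2.1), (q.1.2.2, q.2.2.2.1))), q.2.2.2.2),
            fun _ => rfl⟩⟩
    have e6 : μ.mutInfo (fun ω => ((tupFrom W 1 b ω, tupFrom L 1 b ω, tupFrom Z 1 b ω), K (b - 1) ω))
          (K b)
        = μ.mutInfo (fun ω => ((tupFrom W 1 (b - 1) ω, tupFrom L 1 (b - 1) ω, tupFrom Z 1 (b - 1) ω),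
            (W b ω, L b ω, Z b ω, K (b - 1) ω))) (K b) :=
      μ.mutInfo_congr md6 (MutDet.refl _)
    linarith
  -- ===== base case : I(M ; Z^2) =====
  have h1m : (1:ℕ) ∈ Finset.Icc 1 (B - 1) := Finset.mem_Icc.mpr ⟨le_refl 1, by omega⟩
  have base : μ.mutInfo (fun ω => (tupFrom W 1 B ω, tupFrom L 1 B ω)) (tupFrom Z 1 2)
      ≤ μ.mutInfo (fun ω => (W (1 + 1) ω, L (1 + 1) ω)) (Z (1 + 1))
        + μ.mutInfo (fun ω => (W 1 ω, L 1 ω, Z 1 ω, K (1 - 1) ω)) (K 1) := by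
    have sW : MutDet (tupFrom W 1 B)
        (fun ω => ((tupFrom W 1 1 ω, W (1 + 1) ω), tupFrom W (1 + 2) (B + 1 - (1 + 2)) ω)) :=
      ((mutDet_tup_congr W rfl (by omega : B = (1 + 1) + (B - (1 + 1)))).trans
        (mutDet_split W 1 (1 + 1) (B - (1 + 1)))).trans
        (MutDet.pair
          ((mutDet_split W 1 1 1).trans ((MutDet.refl _).pair (mutDet_single W (1 + 1))))
          (mutDet_tup_congr W (by omega) (by omega)))
    have sL : MutDet (tupFrom L 1 B)
        (fun ω => ((tupFrom L 1 1 ω, L (1 + 1) ω), tupFrom L (1 + 2) (B + 1 - (1 + 2)) ω)) :=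
      ((mutDet_tup_congr L rfl (by omega : B = (1 + 1) + (B - (1 + 1)))).trans
        (mutDet_split L 1 (1 + 1) (B - (1 + 1)))).trans
        (MutDet.pair
          ((mutDet_split L 1 1 1).trans ((MutDet.refl _).pair (mutDet_single L (1 + 1))))
          (mutDet_tup_congr L (by omega) (by omega)))
    have sW2 : MutDet (tupFrom W 1 (1 + 1)) (fun ω => (W 1 ω, W (1 + 1) ω)) :=
      (mutDet_split W 1 1 1).trans ((mutDet_single W 1).pair (mutDet_single W (1 + 1)))
    have sL2 : MutDet (tupFrom L 1 (1 + 1)) (fun ω => (L 1 ω, L (1 + 1) ω)) :=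
      (mutDet_split L 1 1 1).trans ((mutDet_single L 1).pair (mutDet_single L (1 + 1)))
    have sZ2 : MutDet (tupFrom Z 1 (1 + 1)) (fun ω => (Z 1 ω, Z (1 + 1) ω)) :=
      (mutDet_split Z 1 1 1).trans ((mutDet_single Z 1).pair (mutDet_single Z (1 + 1)))
    have mdBIG : MutDet
        (fun ω => (tupFrom Z 1 (1 + 1) ω, tupFrom W 1 (1 + 1) ω, tupFrom L 1 (1 + 1) ω))
        (fun ω => ((Z 1 ω, Z (1 + 1) ω), ((W 1 ω, W (1 + 1) ω), (L 1 ω, L (1 + 1) ω)))) :=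
      sZ2.pair (sW2.pair sL2)
    -- I(M ; Z^2) = I(M ; (Z_2, Z_1))
    have mdZ21 : MutDet (tupFrom Z 1 2) (fun ω => (Z (1 + 1) ω, Z 1 ω)) :=
      ((mutDet_tup_congr Z rfl (by omega : 2 = 1 + 1)).trans sZ2).trans
        (MutDet.swap (Z 1) (Z (1 + 1)))
    have e0 : μ.mutInfo (fun ω => (tupFrom W 1 B ω, tupFrom L 1 B ω)) (tupFrom Z 1 2)
        = μ.mutInfo (fun ω => (tupFrom W 1 B ω, tupFrom L 1 B ω))
            (fun ω => (Z (1 + 1) ω, Z 1 ω)) :=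
      μ.mutInfo_congr (MutDet.refl _) mdZ21
    have hch : μ.mutInfo (fun ω => (tupFrom W 1 B ω, tupFrom L 1 B ω))
          (fun ω => (Z (1 + 1) ω, Z 1 ω))
        = μ.mutInfo (fun ω => (tupFrom W 1 B ω, tupFrom L 1 B ω)) (Z (1 + 1))
          + μ.mutInfo (fun ω => ((tupFrom W 1 B ω, tupFrom L 1 B ω), Z (1 + 1) ω)) (Z 1)
          - μ.mutInfo (Z (1 + 1)) (Z 1) :=
      μ.mutInfo_chain _ _ _
    have hnn0 := μ.mutInfo_nonneg (Z (1 + 1)) (Z 1)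
    -- future-message independence instance (b = 1)
    have hiB : μ.mutInfo
        (fun ω => (tupFrom W (1 + 2) (B + 1 - (1 + 2)) ω, tupFrom L (1 + 2) (B + 1 - (1 + 2)) ω))
        (fun ω => (tupFrom Z 1 (1 + 1) ω, tupFrom W 1 (1 + 1) ω, tupFrom L 1 (1 + 1) ω)) = 0 := by
      have h : μ.H (fun ω =>
            ((tupFrom W (1 + 2) (B + 1 - (1 + 2)) ω, tupFrom L (1 + 2) (B + 1 - (1 + 2)) ω),
              (tupFrom Z 1 (1 + 1) ω, tupFrom W 1 (1 + 1) ω, tupFrom L 1 (1 + 1) ω)))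
          = μ.H (fun ω => (tupFrom W (1 + 2) (B + 1 - (1 + 2)) ω, tupFrom L (1 + 2) (B + 1 - (1 + 2)) ω))
            + μ.H (fun ω => (tupFrom Z 1 (1 + 1) ω, tupFrom W 1 (1 + 1) ω, tupFrom L 1 (1 + 1) ω)) :=
        μ.H_pair_of_indep (hfut 1 h1m)
      unfold FinPMF.mutInfo
      linarith
    -- drop the future from I(M ; Z_2)
    have mdM : MutDet (fun ω => (tupFrom W 1 B ω, tupFrom L 1 B ω))
        (fun ω => ((tupFrom W (1 + 2) (B + 1 - (1 + 2)) ω, tupFrom L (1 + 2) (B + 1 - (1 + 2)) ω),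
          (W (1 + 1) ω, L (1 + 1) ω))) := by
      constructor
      · exact (sW.pair sL).1.trans
          ⟨fun p => ((p.1.2, p.2.2), (p.1.1.2, p.2.1.2)), fun _ => rfl⟩
      · refine Det.trans ?_ (sW.pair sL).2
        exact Det.pair
          (Det.pair
            (Det.pair ((Det.const hW1).trans (mutDet_single W 1).2)
              ⟨fun q => q.2.1, fun _ => rfl⟩)
            ⟨fun q => q.1.1, fun _ => rfl⟩)
          (Det.pair
            (Det.pair ((Det.const hL1).trans (mutDet_single L 1).2)
              ⟨fun q => q.2.2, fun _ => rfl⟩)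
            ⟨fun q => q.1.2, fun _ => rfl⟩)
    have e2 : μ.mutInfo (fun ω => (tupFrom W 1 B ω, tupFrom L 1 B ω)) (Z (1 + 1))
        = μ.mutInfo
            (fun ω => ((tupFrom W (1 + 2) (B + 1 - (1 + 2)) ω, tupFrom L (1 + 2) (B + 1 - (1 + 2)) ω),
              (W (1 + 1) ω, L (1 + 1) ω))) (Z (1 + 1)) :=
      μ.mutInfo_congr mdM (MutDet.refl _)
    have mdB1 : MutDet (fun ω => (Z 1 ω, ((W (1 + 1) ω, L (1 + 1) ω), Z (1 + 1) ω)))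
        (fun ω => (tupFrom Z 1 (1 + 1) ω, tupFrom W 1 (1 + 1) ω, tupFrom L 1 (1 + 1) ω)) := by
      constructor
      · refine Det.trans ?_ mdBIG.2
        exact Det.pair
          (Det.pair ⟨fun q => q.1, fun _ => rfl⟩ ⟨fun q => q.2.2, fun _ => rfl⟩)
          (Det.pair
            (Det.pair (Det.const hW1) ⟨fun q => q.2.1.1, fun _ => rfl⟩)
            (Det.pair (Det.const hL1) ⟨fun q => q.2.1.2, fun _ => rfl⟩))
      · exact mdBIG.1.trans
          ⟨fun p => (p.1.1, ((p.2.1.2, p.2.2.2), p.1.2)), fun _ => rfl⟩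
    have h0 : μ.mutInfo
        (fun ω => (tupFrom W (1 + 2) (B + 1 - (1 + 2)) ω, tupFrom L (1 + 2) (B + 1 - (1 + 2)) ω))
        (fun ω => ((W (1 + 1) ω, L (1 + 1) ω), Z (1 + 1) ω)) ≤ 0 := by
      have hple : μ.mutInfo
          (fun ω => (tupFrom W (1 + 2) (B + 1 - (1 + 2)) ω, tupFrom L (1 + 2) (B + 1 - (1 + 2)) ω))
          (fun ω => ((W (1 + 1) ω, L (1 + 1) ω), Z (1 + 1) ω))
          ≤ μ.mutInfo
            (fun ω => (tupFrom W (1 + 2) (B + 1 - (1 + 2)) ω, tupFrom L (1 + 2) (B + 1 - (1 + 2)) ω))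
            (fun ω => (Z 1 ω, ((W (1 + 1) ω, L (1 + 1) ω), Z (1 + 1) ω))) :=
        μ.mutInfo_le_pair_right _ _ _
      have e3 : μ.mutInfo
          (fun ω => (tupFrom W (1 + 2) (B + 1 - (1 + 2)) ω, tupFrom L (1 + 2) (B + 1 - (1 + 2)) ω))
          (fun ω => (Z 1 ω, ((W (1 + 1) ω, L (1 + 1) ω), Z (1 + 1) ω)))
          = μ.mutInfo
            (fun ω => (tupFrom W (1 + 2) (B + 1 - (1 + 2)) ω, tupFrom L (1 + 2) (B + 1 - (1 + 2)) ω))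
            (fun ω => (tupFrom Z 1 (1 + 1) ω, tupFrom W 1 (1 + 1) ω, tupFrom L 1 (1 + 1) ω)) :=
        μ.mutInfo_congr (MutDet.refl _) mdB1
      linarith
    have hd1 : μ.mutInfo
        (fun ω => ((tupFrom W (1 + 2) (B + 1 - (1 + 2)) ω, tupFrom L (1 + 2) (B + 1 - (1 + 2)) ω),
          (W (1 + 1) ω, L (1 + 1) ω))) (Z (1 + 1))
        ≤ μ.mutInfo (fun ω => (W (1 + 1) ω, L (1 + 1) ω)) (Z (1 + 1)) :=
      μ.mutInfo_drop_left h0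
    -- second term : I((M, Z_2) ; Z_1) ≤ I((W_1,L_1,Z_1,K_0) ; K_1)
    have mdMZ : MutDet (fun ω => ((tupFrom W 1 B ω, tupFrom L 1 B ω), Z (1 + 1) ω))
        (fun ω => ((tupFrom W (1 + 2) (B + 1 - (1 + 2)) ω, tupFrom L (1 + 2) (B + 1 - (1 + 2)) ω),
          ((W (1 + 1) ω, L (1 + 1) ω), Z (1 + 1) ω))) := by
      constructor
      · exact ((sW.pair sL).pair (MutDet.refl (Z (1 + 1)))).1.trans
          ⟨fun p => ((p.1.1.2, p.1.2.2), ((p.1.1.1.2, p.1.2.1.2), p.2)), fun _ => rfl⟩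
      · refine Det.pair (Det.trans ?_ (sW.pair sL).2) ⟨fun q => q.2.2, fun _ => rfl⟩
        exact Det.pair
          (Det.pair
            (Det.pair ((Det.const hW1).trans (mutDet_single W 1).2)
              ⟨fun q => q.2.1.1, fun _ => rfl⟩)
            ⟨fun q => q.1.1, fun _ => rfl⟩)
          (Det.pair
            (Det.pair ((Det.const hL1).trans (mutDet_single L 1).2)
              ⟨fun q => q.2.1.2, fun _ => rfl⟩)
            ⟨fun q => q.1.2, fun _ => rfl⟩)
    have e2' : μ.mutInfo (fun ω => ((tupFrom W 1 B ω, tupFrom L 1 B ω), Z (1 + 1) ω)) (Z 1)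
        = μ.mutInfo
            (fun ω => ((tupFrom W (1 + 2) (B + 1 - (1 + 2)) ω, tupFrom L (1 + 2) (B + 1 - (1 + 2)) ω),
              ((W (1 + 1) ω, L (1 + 1) ω), Z (1 + 1) ω))) (Z 1) :=
      μ.mutInfo_congr mdMZ (MutDet.refl _)
    have mdB2 : MutDet (fun ω => (((W (1 + 1) ω, L (1 + 1) ω), Z (1 + 1) ω), Z 1 ω))
        (fun ω => (tupFrom Z 1 (1 + 1) ω, tupFrom W 1 (1 + 1) ω, tupFrom L 1 (1 + 1) ω)) := by
      constructor
      · refine Det.trans ?_ mdBIG.2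
        exact Det.pair
          (Det.pair ⟨fun p => p.2, fun _ => rfl⟩ ⟨fun p => p.1.2, fun _ => rfl⟩)
          (Det.pair
            (Det.pair (Det.const hW1) ⟨fun p => p.1.1.1, fun _ => rfl⟩)
            (Det.pair (Det.const hL1) ⟨fun p => p.1.1.2, fun _ => rfl⟩))
      · exact mdBIG.1.trans
          ⟨fun p => (((p.2.1.2, p.2.2.2), p.1.2), p.1.1), fun _ => rfl⟩
    have h0' : μ.mutInfo
        (fun ω => (tupFrom W (1 + 2) (B + 1 - (1 + 2)) ω, tupFrom L (1 + 2) (B + 1 - (1 + 2)) ω))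
        (fun ω => (((W (1 + 1) ω, L (1 + 1) ω), Z (1 + 1) ω), Z 1 ω)) ≤ 0 := by
      have e3' : μ.mutInfo
          (fun ω => (tupFrom W (1 + 2) (B + 1 - (1 + 2)) ω, tupFrom L (1 + 2) (B + 1 - (1 + 2)) ω))
          (fun ω => (((W (1 + 1) ω, L (1 + 1) ω), Z (1 + 1) ω), Z 1 ω))
          = μ.mutInfo
            (fun ω => (tupFrom W (1 + 2) (B + 1 - (1 + 2)) ω, tupFrom L (1 + 2) (B + 1 - (1 + 2)) ω))
            (fun ω => (tupFrom Z 1 (1 + 1) ω, tupFrom W 1 (1 + 1) ω, tupFrom L 1 (1 + 1) ω)) :=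
        μ.mutInfo_congr (MutDet.refl _) mdB2
      exact le_of_eq (e3'.trans hiB)
    have hd2 : μ.mutInfo
        (fun ω => ((tupFrom W (1 + 2) (B + 1 - (1 + 2)) ω, tupFrom L (1 + 2) (B + 1 - (1 + 2)) ω),
          ((W (1 + 1) ω, L (1 + 1) ω), Z (1 + 1) ω))) (Z 1)
        ≤ μ.mutInfo (fun ω => ((W (1 + 1) ω, L (1 + 1) ω), Z (1 + 1) ω)) (Z 1) :=
      μ.mutInfo_drop_left h0'
    -- markov via hkey at b = 1
    have ecomm : μ.mutInfo (fun ω => ((W (1 + 1) ω, L (1 + 1) ω), Z (1 + 1) ω)) (Z 1)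
        = μ.mutInfo (Z 1) (fun ω => ((W (1 + 1) ω, L (1 + 1) ω), Z (1 + 1) ω)) :=
      μ.mutInfo_comm _ _
    have mdZA : MutDet (Z 1) (fun ω => (tupFrom W 1 1 ω, tupFrom L 1 1 ω, tupFrom Z 1 1 ω)) := by
      constructor
      · exact Det.pair ((Det.const hW1).trans (mutDet_single W 1).2)
          (Det.pair ((Det.const hL1).trans (mutDet_single L 1).2) (mutDet_single Z 1).2)
      · exact Det.trans (X := fun ω => (tupFrom W 1 1 ω, tupFrom L 1 1 ω, tupFrom Z 1 1 ω))
          (Y := tupFrom Z 1 1) ⟨fun p => p.2.2, fun _ => rfl⟩ (mutDet_single Z 1).1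
    have mdMC : MutDet (fun ω => ((W (1 + 1) ω, L (1 + 1) ω), Z (1 + 1) ω))
        (fun ω => (Z (1 + 1) ω, W (1 + 1) ω, L (1 + 1) ω)) :=
      ⟨⟨fun p => (p.2, p.1.1, p.1.2), fun _ => rfl⟩,
       ⟨fun q => ((q.2.1, q.2.2), q.1), fun _ => rfl⟩⟩
    have e4 : μ.mutInfo (Z 1) (fun ω => ((W (1 + 1) ω, L (1 + 1) ω), Z (1 + 1) ω))
        = μ.mutInfo (fun ω => (tupFrom W 1 1 ω, tupFrom L 1 1 ω, tupFrom Z 1 1 ω))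
            (fun ω => (Z (1 + 1) ω, W (1 + 1) ω, L (1 + 1) ω)) :=
      μ.mutInfo_congr mdZA mdMC
    have hkH1 : μ.H (fun ω => ((tupFrom W 1 1 ω, tupFrom L 1 1 ω, tupFrom Z 1 1 ω), K 1 ω,
          (Z (1 + 1) ω, W (1 + 1) ω, L (1 + 1) ω))) + μ.H (K 1)
        = μ.H (fun ω => ((tupFrom W 1 1 ω, tupFrom L 1 1 ω, tupFrom Z 1 1 ω), K 1 ω))
          + μ.H (fun ω => (K 1 ω, (Z (1 + 1) ω, W (1 + 1) ω, L (1 + 1) ω))) :=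
      μ.H_condIndep (hkey 1 h1m)
    have hmar1 : μ.mutInfo (fun ω => (tupFrom W 1 1 ω, tupFrom L 1 1 ω, tupFrom Z 1 1 ω))
          (fun ω => (Z (1 + 1) ω, W (1 + 1) ω, L (1 + 1) ω))
        ≤ μ.mutInfo (fun ω => (tupFrom W 1 1 ω, tupFrom L 1 1 ω, tupFrom Z 1 1 ω)) (K 1) :=
      μ.mutInfo_markov hkH1
    have mdAQ : MutDet (fun ω => (tupFrom W 1 1 ω, tupFrom L 1 1 ω, tupFrom Z 1 1 ω))
        (fun ω => (W 1 ω, L 1 ω, Z 1 ω, K (1 - 1) ω)) := by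
      constructor
      · exact Det.pair ((Det.fst _ _).trans (mutDet_single W 1).1)
          (Det.pair
            (Det.trans (Y := tupFrom L 1 1) ⟨fun p => p.2.1, fun _ => rfl⟩
              (mutDet_single L 1).1)
            (Det.pair
              (Det.trans (Y := tupFrom Z 1 1) ⟨fun p => p.2.2, fun _ => rfl⟩
                (mutDet_single Z 1).1)
              (Det.const hK0)))
      · exact Det.pair ((Det.fst _ _).trans (mutDet_single W 1).2)
          (Det.pair
            (Det.trans (Y := L 1) ⟨fun q => q.2.1, fun _ => rfl⟩
              (mutDet_single L 1).2)
            (Det.trans (Y := Z 1) ⟨fun q => q.2.2.1, fun _ => rfl⟩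
              (mutDet_single Z 1).2))
    have e5 : μ.mutInfo (fun ω => (tupFrom W 1 1 ω, tupFrom L 1 1 ω, tupFrom Z 1 1 ω)) (K 1)
        = μ.mutInfo (fun ω => (W 1 ω, L 1 ω, Z 1 ω, K (1 - 1) ω)) (K 1) :=
      μ.mutInfo_congr mdAQ (MutDet.refl _)
    linarith
  -- ===== main induction =====
  have main : ∀ j, 2 ≤ j → j ≤ B →
      μ.mutInfo (fun ω => (tupFrom W 1 B ω, tupFrom L 1 B ω)) (tupFrom Z 1 j)
        ≤ ∑ b ∈ Finset.Icc 1 (j - 1),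
            (μ.mutInfo (fun ω => (W (b + 1) ω, L (b + 1) ω)) (Z (b + 1))
              + μ.mutInfo (fun ω => (W b ω, L b ω, Z b ω, K (b - 1) ω)) (K b)) := by
    intro j hj2
    induction j, hj2 using Nat.le_induction with
    | base =>
      intro _
      rw [show (2:ℕ) - 1 = 1 from rfl, Finset.Icc_self, Finset.sum_singleton]
      exact base
    | succ n hn ih =>
      intro hnB
      have ihB : μ.mutInfo (fun ω => (tupFrom W 1 B ω, tupFrom L 1 B ω)) (tupFrom Z 1 n)
          ≤ ∑ b ∈ Finset.Icc 1 (n - 1),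
              (μ.mutInfo (fun ω => (W (b + 1) ω, L (b + 1) ω)) (Z (b + 1))
                + μ.mutInfo (fun ω => (W b ω, L b ω, Z b ω, K (b - 1) ω)) (K b)) :=
        ih (by omega)
      obtain ⟨m, rfl⟩ : ∃ m, n = m + 1 := ⟨n - 1, by omega⟩
      rw [show m + 1 + 1 - 1 = m + 1 from rfl,
        Finset.sum_Icc_succ_top (by omega : 1 ≤ m + 1)]
      have hsZ : MutDet (tupFrom Z 1 (m + 1 + 1))
          (fun ω => (tupFrom Z 1 (m + 1) ω, Z (m + 1 + 1) ω)) :=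
        (mutDet_split Z 1 (m + 1) 1).trans ((MutDet.refl _).pair
          ((mutDet_single Z (1 + (m + 1))).trans (mutDet_index Z (by omega))))
      have e0 : μ.mutInfo (fun ω => (tupFrom W 1 B ω, tupFrom L 1 B ω)) (tupFrom Z 1 (m + 1 + 1))
          = μ.mutInfo (fun ω => (tupFrom W 1 B ω, tupFrom L 1 B ω))
              (fun ω => (tupFrom Z 1 (m + 1) ω, Z (m + 1 + 1) ω)) :=
        μ.mutInfo_congr (MutDet.refl _) hsZ
      have hch : μ.mutInfo (fun ω => (tupFrom W 1 B ω, tupFrom L 1 B ω))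
            (fun ω => (tupFrom Z 1 (m + 1) ω, Z (m + 1 + 1) ω))
          = μ.mutInfo (fun ω => (tupFrom W 1 B ω, tupFrom L 1 B ω)) (tupFrom Z 1 (m + 1))
            + μ.mutInfo (fun ω => ((tupFrom W 1 B ω, tupFrom L 1 B ω), tupFrom Z 1 (m + 1) ω))
                (Z (m + 1 + 1))
            - μ.mutInfo (tupFrom Z 1 (m + 1)) (Z (m + 1 + 1)) :=
        μ.mutInfo_chain _ _ _
      have hnn := μ.mutInfo_nonneg (tupFrom Z 1 (m + 1)) (Z (m + 1 + 1))
      have hbl := block (m + 1) (by omega) (by omega)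
      rw [show m + 1 - 1 = m from rfl] at ihB
      linarith
  exact main B hB le_rfl
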